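/- arXiv:math/0410348 — 5 statements merged into one kernel-verified Lean document; each statement's English description precedes it below -/
import Mathlib

section
/- Let H be a separable infinite-dimensional complex Hilbert space and let {f_j : j ∈ ℕ} ⊂ H be a tight frame for H with frame bound A > 0, i.e., for all f ∈ H, ∑_{j∈ℕ} |⟨f, f_j⟩|² = A‖f‖². Then there exists a separable complex Hilbert space H' containing H as a closed subspace and an orthogonal basis {e_j : j ∈ ℕ} of H' (an orthogonal family with dense span, all elements of equal norm √A) such that P(e_j) = f_j for every j ∈ ℕ, where P : H' → H is the orthogonal projection onto H. -/
open scoped ComplexInnerProductSpace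
open scoped ENNReal

/-- **Naimark's theorem (tight frame direction).** Every tight frame with frame bound `A > 0`
in a separable infinite-dimensional complex Hilbert space `H` is the orthogonal projection of
an orthogonal basis (an orthogonal family of equal norm `√A` with dense span) of an ambient
separable Hilbert space `H'` containing `H` as a closed subspace. The containment is realized
by a linear isometry `ι : H →ₗᵢ[ℂ] H'` (whose range is automatically closed since `H` is
complete), and the condition `P (e j) = f j` for the orthogonal projection `P` onto `ι(H)` is
expressed by the defining property `e j - ι (f j) ⟂ ι(H)`. -/
theorem tight_frame_is_projection_of_orthogonal_basis
    {H : Type} [NormedAddCommGroup H] [InnerProductSpace ℂ H] [CompleteSpace H]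
    [TopologicalSpace.SeparableSpace H] (hinf : ¬ FiniteDimensional ℂ H)
    (A : ℝ) (hA : 0 < A) (f : ℕ → H)
    (hf : ∀ x : H, ∑' j : ℕ, ‖(⟪x, f j⟫ : ℂ)‖ ^ 2 = A * ‖x‖ ^ 2) :
    ∃ (H' : Type) (_ : NormedAddCommGroup H') (_ : InnerProductSpace ℂ H')
      (_ : CompleteSpace H') (_ : TopologicalSpace.SeparableSpace H')
      (ι : H →ₗᵢ[ℂ] H') (e : ℕ → H'),
      (∀ i j : ℕ, i ≠ j → (⟪e i, e j⟫ : ℂ) = 0) ∧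
      (∀ j : ℕ, ‖e j‖ ^ 2 = A) ∧
      (Submodule.span ℂ (Set.range e)).topologicalClosure = ⊤ ∧
      (∀ (j : ℕ) (h : H), (⟪e j - ι (f j), ι h⟫ : ℂ) = 0) := by
  classical
  set K := lp (fun _ : ℕ => ℂ) 2 with hK
  -- summability
  have hS : ∀ x : H, Summable (fun j => ‖(⟪x, f j⟫ : ℂ)‖ ^ 2) := by
    intro x
    rcases eq_or_ne x 0 with rfl | hx
    · simpa using summable_zero
    · by_contra hns
      have h0 := tsum_eq_zero_of_not_summable hns
      rw [hf x] at h0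
      have hx' : 0 < ‖x‖ := norm_pos_iff.mpr hx
      have : 0 < A * ‖x‖ ^ 2 := mul_pos hA (pow_pos hx' 2)
      linarith
  have hmem : ∀ x : H, Memℓp (fun j : ℕ => (⟪f j, x⟫ : ℂ)) 2 := by
    intro x
    apply memℓp_gen
    have : (fun j : ℕ => ‖(⟪f j, x⟫ : ℂ)‖ ^ (2 : ℝ≥0∞).toReal)
        = fun j : ℕ => ‖(⟪x, f j⟫ : ℂ)‖ ^ 2 := by
      funext j
      rw [norm_inner_symm]
      norm_num
    rw [this]
    exact hS x
  set T : H → K := fun x => ⟨fun j => (⟪f j, x⟫ : ℂ), hmem x⟩ with hT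
  have hTapp : ∀ (x : H) (j : ℕ), (T x : ∀ _ : ℕ, ℂ) j = (⟪f j, x⟫ : ℂ) := fun _ _ => rfl
  have hTnorm : ∀ x : H, ‖T x‖ ^ 2 = A * ‖x‖ ^ 2 := by
    intro x
    have h2 : (0:ℝ) < (2 : ℝ≥0∞).toReal := by norm_num
    have := lp.norm_rpow_eq_tsum h2 (T x)
    have e2 : ((2 : ℝ≥0∞).toReal) = (2:ℝ) := by norm_num
    rw [e2] at this
    calc ‖T x‖ ^ 2 = ‖T x‖ ^ (2:ℝ) := by norm_num [Real.rpow_natCast]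
    _ = ∑' j : ℕ, ‖(T x : ∀ _ : ℕ, ℂ) j‖ ^ (2:ℝ) := this
    _ = ∑' j : ℕ, ‖(⟪x, f j⟫ : ℂ)‖ ^ 2 := by
        congr 1; funext j; rw [hTapp, norm_inner_symm]; norm_num [Real.rpow_natCast]
    _ = A * ‖x‖ ^ 2 := hf x
  have hc0 : Real.sqrt A ≠ 0 := by positivity
  set c : ℂ := (Real.sqrt A : ℂ) with hc
  have hcne : c ≠ 0 := Complex.ofReal_ne_zero.mpr hc0
  have hcnorm : ‖c‖ = Real.sqrt A := by
    rw [hc, Complex.norm_real, Real.norm_of_nonneg (Real.sqrt_nonneg A)]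
  have hTadd : ∀ x y : H, T (x + y) = T x + T y := by
    intro x y
    apply Subtype.ext
    funext j
    have : ((T x + T y : K) : ∀ _ : ℕ, ℂ) j = (T x : ∀ _ : ℕ, ℂ) j + (T y : ∀ _ : ℕ, ℂ) j := rfl
    rw [this, hTapp, hTapp, hTapp, inner_add_right]
  have hTsmul : ∀ (a : ℂ) (x : H), T (a • x) = a • T x := by
    intro a x
    apply Subtype.ext
    funext j
    have : ((a • T x : K) : ∀ _ : ℕ, ℂ) j = a • (T x : ∀ _ : ℕ, ℂ) j := rfl
    rw [this, hTapp, hTapp, inner_smul_right, smul_eq_mul]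
  have hTn : ∀ x : H, ‖T x‖ = Real.sqrt A * ‖x‖ := by
    intro x
    have h2 : ‖T x‖ ^ 2 = (Real.sqrt A * ‖x‖) ^ 2 := by
      rw [hTnorm x, mul_pow, Real.sq_sqrt hA.le]
    rw [← Real.sqrt_sq (norm_nonneg (T x)), h2, Real.sqrt_sq (by positivity)]
  set ι : H →ₗᵢ[ℂ] K :=
    { toFun := fun x => c⁻¹ • T x
      map_add' := fun x y => by
        show c⁻¹ • T (x + y) = c⁻¹ • T x + c⁻¹ • T y
        rw [hTadd, smul_add]
      map_smul' := fun a x => by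
        show c⁻¹ • T (a • x) = a • (c⁻¹ • T x)
        rw [hTsmul, smul_comm]
      norm_map' := by
        intro x
        show ‖c⁻¹ • T x‖ = ‖x‖
        rw [norm_smul, norm_inv, hcnorm, hTn]
        field_simp } with hι
  have hιapp : ∀ x : H, ι x = c⁻¹ • T x := fun _ => rfl
  -- the orthogonal family
  set e : ℕ → K := fun j => c • lp.single 2 j (1 : ℂ) with he
  have hdense : (Submodule.span ℂ (Set.range e)).topologicalClosure = ⊤ := by
    have hspan : Submodule.span ℂ (Set.range e)
        = Submodule.span ℂ (Set.range fun j : ℕ => (lp.single 2 j (1:ℂ) : K)) := by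
      apply le_antisymm
      · rw [Submodule.span_le]
        rintro - ⟨j, rfl⟩
        exact Submodule.smul_mem _ c (Submodule.subset_span ⟨j, rfl⟩)
      · rw [Submodule.span_le]
        rintro - ⟨j, rfl⟩
        have h2 : (lp.single 2 j (1:ℂ) : K) = c⁻¹ • e j := by
          rw [he]
          simp [smul_smul, inv_mul_cancel₀ hcne]
        show (lp.single 2 j (1:ℂ) : K) ∈ _
        rw [h2]
        exact Submodule.smul_mem _ _ (Submodule.subset_span ⟨j, rfl⟩)
    rw [hspan]
    let b : HilbertBasis ℕ ℂ K := HilbertBasis.ofRepr (LinearIsometryEquiv.refl ℂ K)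
    have hb : ∀ j : ℕ, b j = (lp.single 2 j (1:ℂ) : K) := fun j =>
      (b.repr_symm_single j).symm
    have := b.dense_span
    have hfun : (fun j : ℕ => (lp.single 2 j (1:ℂ) : K)) = ⇑b :=
      funext fun j => (hb j).symm
    rw [hfun]
    exact this
  refine ⟨K, inferInstance, inferInstance, inferInstance, ?_, ι, e, ?_, ?_, ?_, ?_⟩
  · -- separability
    have hsep : TopologicalSpace.IsSeparable (Set.range e) :=
      (Set.countable_range e).isSeparable
    have h1 : TopologicalSpace.IsSeparable
        (Submodule.span ℂ (Set.range e) : Set K) := hsep.span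
    have h2 := h1.closure
    have h3 : closure (Submodule.span ℂ (Set.range e) : Set K) = Set.univ := by
      rw [← Submodule.topologicalClosure_coe, hdense]
      rfl
    rw [h3] at h2
    exact TopologicalSpace.isSeparable_univ_iff.mp h2
  · -- orthogonality
    intro i j hij
    rw [he]
    simp only [inner_smul_left, inner_smul_right]
    rw [lp.inner_single_left]
    have : (lp.single 2 j (1:ℂ) : ∀ _ : ℕ, ℂ) i = 0 := by
      rw [lp.single_apply]
      exact dif_neg hij
    rw [this]
    simp
  · -- norms
    intro j
    rw [he]
    simp only [norm_smul, hcnorm]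
    have h1 : ‖lp.single (E := fun _ : ℕ => ℂ) 2 j (1:ℂ)‖ = 1 := by
      have := lp.norm_single (E := fun _ : ℕ => ℂ) (p := 2) (by norm_num)
        j (1:ℂ)
      simpa using this
    rw [h1, mul_one, Real.sq_sqrt hA.le]
  · exact hdense
  · -- projection property
    intro j h
    rw [inner_sub_left, LinearIsometry.inner_map_map]
    rw [he, hιapp]
    simp only [inner_smul_left, inner_smul_right]
    rw [lp.inner_single_left, hTapp]
    have hcc : (starRingEnd ℂ) c = c := by
      rw [hc]; exact Complex.conj_ofReal _
    rw [hcc, RCLike.inner_apply, map_one, mul_one, ← mul_assoc,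
      inv_mul_cancel₀ hcne, one_mul, sub_self]
end

section
/- Let H be a separable infinite-dimensional complex Hilbert space and let {f_j : j ∈ ℕ} ⊂ H be a frame for H with frame bounds 0 < A ≤ B. Then there exists a separable complex Hilbert space H' containing H as a closed subspace and a Riesz basis {e_j : j ∈ ℕ} of H' with the same constants A and B (i.e., {e_j} is complete in H' and A‖c‖₂² ≤ ‖∑_{j∈ℕ} c(j) e_j‖² ≤ B‖c‖₂² for all c ∈ ℓ²(ℕ)) such that P(e_j) = f_j for every j ∈ ℕ, where P : H' → H is the orthogonal projection onto H. -/
open scoped ComplexInnerProductSpace ENNReal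

set_option maxHeartbeats 1000000
set_option synthInstance.maxHeartbeats 1000000

local notation "E2" => lp (fun _ : ℕ => ℂ) 2


/-- **Naimark's theorem for frames (Casazza–Han–Larson, Kashin–Kulikova).** Every frame
`{f j}` with frame bounds `0 < A ≤ B` in a separable infinite-dimensional complex Hilbert
space `H` is the orthogonal projection of a Riesz basis `{e j}` with the same constants
`A ≤ B` of an ambient separable Hilbert space `H'` containing `H` as a closed subspace
(realized by a linear isometry `ι`). A Riesz basis with constants `A ≤ B` is a complete
system satisfying `A‖c‖² ≤ ‖∑ c j • e j‖² ≤ B‖c‖²` for all `c ∈ ℓ²(ℕ)`. -/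
theorem frame_is_projection_of_riesz_basis
    {H : Type} [NormedAddCommGroup H] [InnerProductSpace ℂ H] [CompleteSpace H]
    [TopologicalSpace.SeparableSpace H] (hinf : ¬ FiniteDimensional ℂ H)
    (A B : ℝ) (hA : 0 < A) (hAB : A ≤ B) (f : ℕ → H)
    (hframe : ∀ x : H,
      A * ‖x‖ ^ 2 ≤ ∑' j : ℕ, ‖(⟪x, f j⟫ : ℂ)‖ ^ 2 ∧
      ∑' j : ℕ, ‖(⟪x, f j⟫ : ℂ)‖ ^ 2 ≤ B * ‖x‖ ^ 2) :
    ∃ (H' : Type) (_ : NormedAddCommGroup H') (_ : InnerProductSpace ℂ H')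
      (_ : CompleteSpace H') (_ : TopologicalSpace.SeparableSpace H')
      (ι : H →ₗᵢ[ℂ] H') (e : ℕ → H'),
      (Submodule.span ℂ (Set.range e)).topologicalClosure = ⊤ ∧
      (∀ c : lp (fun _ : ℕ => ℂ) 2, Summable (fun j : ℕ => c j • e j)) ∧
      (∀ c : lp (fun _ : ℕ => ℂ) 2,
        A * ‖c‖ ^ 2 ≤ ‖∑' j : ℕ, c j • e j‖ ^ 2 ∧
        ‖∑' j : ℕ, c j • e j‖ ^ 2 ≤ B * ‖c‖ ^ 2) ∧
      (∀ (j : ℕ) (h : H), (⟪e j - ι (f j), ι h⟫ : ℂ) = 0) := by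
  have hBnn : (0:ℝ) ≤ B := hA.le.trans hAB
  have hsummable : ∀ x : H, Summable (fun j : ℕ => ‖(⟪x, f j⟫ : ℂ)‖ ^ 2) := by
    intro x
    by_cases hx : x = 0
    · subst hx; simpa using summable_zero
    · by_contra hs
      have h0 := tsum_eq_zero_of_not_summable hs
      have h1 := (hframe x).1
      rw [h0] at h1
      have hx' : 0 < ‖x‖ := norm_pos_iff.mpr hx
      have : 0 < A * ‖x‖ ^ 2 := by positivity
      linarith
  have hmem : ∀ x : H, Memℓp (fun j : ℕ => (⟪f j, x⟫ : ℂ)) 2 := by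
    intro x
    apply memℓp_gen
    have h2 : ∀ j : ℕ, ‖(⟪f j, x⟫ : ℂ)‖ ^ ((2:ℝ≥0∞)).toReal = ‖(⟪x, f j⟫ : ℂ)‖ ^ 2 := by
      intro j
      rw [ENNReal.toReal_ofNat, show ((2:ℝ)) = ((2:ℕ):ℝ) by norm_num, Real.rpow_natCast,
        norm_inner_symm]
    exact (summable_congr h2).mpr (hsummable x)
  let Tlin : H →ₗ[ℂ] E2 :=
    { toFun := fun x => ⟨fun j => (⟪f j, x⟫ : ℂ), hmem x⟩
      map_add' := by
        intro x y; apply lp.ext; funext j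
        simp [inner_add_right]
        rfl
      map_smul' := by
        intro c x; apply lp.ext; funext j
        simp [inner_smul_right] }
  have hTapp : ∀ (x : H) (j : ℕ), (Tlin x) j = (⟪f j, x⟫ : ℂ) := fun x j => rfl
  have hTnorm : ∀ x : H, ‖Tlin x‖ ^ 2 = ∑' j : ℕ, ‖(⟪x, f j⟫ : ℂ)‖ ^ 2 := by
    intro x
    have h := lp.norm_rpow_eq_tsum (p := 2) (E := fun _ : ℕ => ℂ) (by norm_num) (Tlin x)
    simp only [ENNReal.toReal_ofNat] at h
    rw [show ((2:ℝ)) = ((2:ℕ):ℝ) by norm_num] at h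
    simp only [Real.rpow_natCast] at h
    rw [h]
    congr 1; funext j
    rw [hTapp, ← norm_inner_symm]
  -- helper: a ≤ b from a² ≤ b²
  have sqle : ∀ {a b : ℝ}, 0 ≤ a → 0 ≤ b → a ^ 2 ≤ b ^ 2 → a ≤ b := by
    intro a b ha hb h; nlinarith
  have hupper : ∀ x : H, ‖Tlin x‖ ^ 2 ≤ B * ‖x‖ ^ 2 := fun x => by
    rw [hTnorm x]; exact (hframe x).2
  have hlower : ∀ x : H, A * ‖x‖ ^ 2 ≤ ‖Tlin x‖ ^ 2 := fun x => by
    rw [hTnorm x]; exact (hframe x).1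
  let T : H →L[ℂ] E2 := Tlin.mkContinuous (Real.sqrt B) (by
    intro x
    refine sqle (norm_nonneg _) (by positivity) ?_
    calc ‖Tlin x‖ ^ 2 ≤ B * ‖x‖ ^ 2 := hupper x
    _ = (Real.sqrt B * ‖x‖) ^ 2 := by
        rw [mul_pow, Real.sq_sqrt hBnn])
  have hTcoe : ∀ x : H, T x = Tlin x := fun x => rfl
  have hTnormle : ‖T‖ ≤ Real.sqrt B := Tlin.mkContinuous_norm_le (by positivity) _
  let Tadj : E2 →L[ℂ] H := ContinuousLinearMap.adjoint T
  have hTadj_single : ∀ j : ℕ, Tadj (lp.single 2 j 1) = f j := by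
    intro j
    refine ext_inner_right ℂ fun y => ?_
    rw [ContinuousLinearMap.adjoint_inner_left, lp.inner_single_left]
    simp [hTcoe, hTapp]
  set M : Submodule ℂ E2 := LinearMap.range (T : H →ₗ[ℂ] E2) with hM
  have hanti : AntilipschitzWith (Real.toNNReal (Real.sqrt A)⁻¹) T := by
    apply T.antilipschitz_of_bound
    intro x
    rw [Real.coe_toNNReal _ (by positivity)]
    have h := hlower x
    have hsA : (0:ℝ) < Real.sqrt A := Real.sqrt_pos.mpr hA
    rw [inv_mul_eq_div, le_div_iff₀ hsA]
    refine sqle (by positivity) (norm_nonneg _) ?_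
    rw [mul_pow, Real.sq_sqrt hA.le, mul_comm]
    exact h
  have hMclosed : IsClosed (M : Set E2) := by
    rw [hM, LinearMap.coe_range]
    exact hanti.isClosed_range T.uniformContinuous
  haveI : CompleteSpace M := hMclosed.completeSpace_coe
  set W : Submodule ℂ E2 := Mᗮ with hW
  have hTadj_orth : ∀ d : E2, d ∈ W → Tadj d = 0 := by
    intro d hd
    refine ext_inner_right ℂ fun y => ?_
    rw [ContinuousLinearMap.adjoint_inner_left, inner_zero_left]
    have : T y ∈ M := LinearMap.mem_range_self _ y
    exact inner_eq_zero_symm.mp ((Submodule.mem_orthogonal M d).1 hd (T y) this)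
  -- ambient space
  let Q : E2 →L[ℂ] W := Submodule.orthogonalProjectionOnto W
  let Lc := WithLp.prodContinuousLinearEquiv 2 ℂ H ↥W
  let S : E2 →L[ℂ] WithLp 2 (H × ↥W) :=
    (Lc.symm : H × ↥W →L[ℂ] WithLp 2 (H × ↥W)).comp
      (Tadj.prod (((Real.sqrt A : ℂ)) • Q))
  have hSfst : ∀ c : E2, (S c).fst = Tadj c := fun c => rfl
  have hSsnd : ∀ c : E2, (S c).snd = (Real.sqrt A : ℂ) • Q c := fun c => rfl
  let e : ℕ → WithLp 2 (H × ↥W) := fun j => S (lp.single 2 j 1)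
  have hhasSum : ∀ c : E2, HasSum (fun j : ℕ => c j • e j) (S c) := by
    intro c
    have h1 : HasSum (fun j : ℕ => lp.single 2 j (c j)) c := lp.hasSum_single (by norm_num) c
    have h2 := h1.mapL S
    refine h2.congr_fun fun j => ?_
    have hs : (c j : ℂ) • (lp.single 2 j (1:ℂ) : E2) = (lp.single 2 j (c j) : E2) := by
      rw [← lp.single_smul]
      norm_num
    rw [← hs, map_smul]
  -- key operator estimates
  have hadjnorm : ‖Tadj‖ ≤ Real.sqrt B := by
    rw [show Tadj = ContinuousLinearMap.adjoint T from rfl, LinearIsometryEquiv.norm_map]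
    exact hTnormle
  have hkey_upper : ∀ x : H, ‖Tadj (T x)‖ ^ 2 ≤ B * ‖T x‖ ^ 2 := by
    intro x
    have h1 : ‖Tadj (T x)‖ ≤ Real.sqrt B * ‖T x‖ :=
      (Tadj.le_opNorm (T x)).trans (by gcongr)
    calc ‖Tadj (T x)‖ ^ 2 ≤ (Real.sqrt B * ‖T x‖) ^ 2 :=
          pow_le_pow_left₀ (norm_nonneg _) h1 2
      _ = B * ‖T x‖ ^ 2 := by rw [mul_pow, Real.sq_sqrt hBnn]
  have hkey_lower : ∀ x : H, A * ‖T x‖ ^ 2 ≤ ‖Tadj (T x)‖ ^ 2 := by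
    intro x
    have hsA : (0:ℝ) < Real.sqrt A := Real.sqrt_pos.mpr hA
    have hxle : Real.sqrt A * ‖x‖ ≤ ‖T x‖ := by
      refine sqle (by positivity) (norm_nonneg _) ?_
      rw [mul_pow, Real.sq_sqrt hA.le]
      exact hlower x
    have h1 : ‖T x‖ ^ 2 ≤ ‖Tadj (T x)‖ * ‖x‖ := by
      have h2 : (⟪Tadj (T x), x⟫ : ℂ) = ⟪T x, T x⟫ :=
        ContinuousLinearMap.adjoint_inner_left T x (T x)
      have h3 : ‖T x‖ ^ 2 = RCLike.re (⟪Tadj (T x), x⟫ : ℂ) := by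
        rw [h2, inner_self_eq_norm_sq]
      rw [h3]
      calc RCLike.re (⟪Tadj (T x), x⟫ : ℂ) ≤ ‖(⟪Tadj (T x), x⟫ : ℂ)‖ := RCLike.re_le_norm _
        _ ≤ ‖Tadj (T x)‖ * ‖x‖ := norm_inner_le_norm _ _
    by_cases ht : ‖T x‖ = 0
    · rw [ht]
      nlinarith [sq_nonneg ‖Tadj (T x)‖]
    · have ht' : 0 < ‖T x‖ := (norm_nonneg _).lt_of_ne (Ne.symm ht)
      have h7 : Real.sqrt A * (‖T x‖ ^ 2) ≤ ‖Tadj (T x)‖ * ‖T x‖ := by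
        calc Real.sqrt A * (‖T x‖ ^ 2) ≤ Real.sqrt A * (‖Tadj (T x)‖ * ‖x‖) := by
              have := mul_le_mul_of_nonneg_left h1 hsA.le
              linarith
          _ = ‖Tadj (T x)‖ * (Real.sqrt A * ‖x‖) := by ring
          _ ≤ ‖Tadj (T x)‖ * ‖T x‖ := by
              exact mul_le_mul_of_nonneg_left hxle (norm_nonneg _)
      have h8 : (Real.sqrt A * (‖T x‖ ^ 2)) * (Real.sqrt A * (‖T x‖ ^ 2)) ≤
          (‖Tadj (T x)‖ * ‖T x‖) * (‖Tadj (T x)‖ * ‖T x‖) :=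
        mul_le_mul h7 h7 (by positivity) (by positivity)
      have hAe : Real.sqrt A * Real.sqrt A = A := Real.mul_self_sqrt hA.le
      have h9 : A * (‖T x‖ ^ 2 * ‖T x‖ ^ 2) ≤
          (‖Tadj (T x)‖ * ‖T x‖) * (‖Tadj (T x)‖ * ‖T x‖) := by
        have h8' := h8
        rw [show Real.sqrt A * ‖T x‖ ^ 2 * (Real.sqrt A * ‖T x‖ ^ 2)
            = (Real.sqrt A * Real.sqrt A) * (‖T x‖ ^ 2 * ‖T x‖ ^ 2) from by ring,
          hAe] at h8'
        exact h8'
      have htp : 0 < ‖T x‖ ^ 2 := pow_pos ht' 2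
      nlinarith [h9, htp]
  -- norm bounds for S
  have hSbounds : ∀ c : E2, A * ‖c‖ ^ 2 ≤ ‖S c‖ ^ 2 ∧ ‖S c‖ ^ 2 ≤ B * ‖c‖ ^ 2 := by
    intro c
    set m : ↥M := Submodule.orthogonalProjectionOnto M c with hm
    set q : ↥W := Submodule.orthogonalProjectionOnto W c with hq
    have hdecomp : (↑m : E2) + ↑q = c :=
      Submodule.starProjection_add_starProjection_orthogonal (K := M) c
    have hinner : (⟪(↑m : E2), (↑q : E2)⟫ : ℂ) = 0 :=
      Submodule.inner_right_of_mem_orthogonal m.2 q.2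
    have hnormc : ‖c‖ ^ 2 = ‖(↑m : E2)‖ ^ 2 + ‖(↑q : E2)‖ ^ 2 := by
      rw [← hdecomp]
      simpa [pow_two] using norm_add_sq_eq_norm_sq_add_norm_sq_of_inner_eq_zero _ _ hinner
    obtain ⟨x, hx⟩ := m.2
    rw [ContinuousLinearMap.coe_coe] at hx
    have hTadjc : Tadj c = Tadj (T x) := by
      rw [← hdecomp, map_add, hTadj_orth ↑q q.2, add_zero, hx]
    have hQc : Q c = q := rfl
    have hSnorm : ‖S c‖ ^ 2 = ‖Tadj (T x)‖ ^ 2 + A * ‖(↑q : E2)‖ ^ 2 := by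
      rw [WithLp.prod_norm_sq_eq_of_L2, hSfst, hSsnd, hTadjc, hQc]
      congr 1
      rw [norm_smul]
      simp only [Complex.norm_real, Real.norm_eq_abs, abs_of_nonneg (Real.sqrt_nonneg A)]
      rw [mul_pow, Real.sq_sqrt hA.le]
      congr 1
    have hmx : ‖(↑m : E2)‖ = ‖T x‖ := by rw [hx]
    constructor
    · rw [hSnorm, hnormc, hmx]
      have := hkey_lower x
      nlinarith [sq_nonneg ‖(↑q : E2)‖]
    · rw [hSnorm, hnormc, hmx]
      have := hkey_upper x
      nlinarith [sq_nonneg ‖(↑q : E2)‖]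
  -- completeness
  have hcomplete : (Submodule.span ℂ (Set.range e)).topologicalClosure = ⊤ := by
    rw [Submodule.topologicalClosure_eq_top_iff, Submodule.eq_bot_iff]
    intro v hv
    have hv' : ∀ j : ℕ, (⟪e j, v⟫ : ℂ) = 0 := fun j =>
      (Submodule.mem_orthogonal _ v).1 hv (e j)
        (Submodule.subset_span (Set.mem_range_self j))
    set x : H := v.fst with hxdef
    set w : ↥W := v.snd with hwdef
    set d : E2 := T x + (Real.sqrt A : ℂ) • (↑w : E2) with hd
    have hinner_j : ∀ j : ℕ, (⟪(lp.single 2 j (1:ℂ) : E2), d⟫ : ℂ) = 0 := by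
      intro j
      have h1 := hv' j
      rw [WithLp.prod_inner_apply] at h1
      simp only [WithLp.ofLp_fst, WithLp.ofLp_snd] at h1
      have hfst : (e j).fst = f j := by
        show (S (lp.single 2 j 1)).fst = f j
        rw [hSfst, hTadj_single]
      have hsnd : (e j).snd = (Real.sqrt A : ℂ) • Q (lp.single 2 j 1) := hSsnd _
      rw [hfst, hsnd] at h1
      have h2 : (⟪f j, x⟫ : ℂ) = ⟪(lp.single 2 j (1:ℂ) : E2), T x⟫ := by
        rw [lp.inner_single_left]
        simp [hTcoe, hTapp]
      have h4 : (⟪(lp.single 2 j (1:ℂ) : E2) - ↑(Q (lp.single 2 j 1)), (↑w : E2)⟫ : ℂ) = 0 :=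
        Submodule.inner_left_of_mem_orthogonal w.2
          (Submodule.sub_starProjection_mem_orthogonal _)
      rw [inner_sub_left, sub_eq_zero] at h4
      have h3 : (⟪((Real.sqrt A : ℂ) • Q (lp.single 2 j 1) : ↥W), w⟫ : ℂ)
          = (Real.sqrt A : ℂ) * ⟪(lp.single 2 j (1:ℂ) : E2), (↑w : E2)⟫ := by
        rw [inner_smul_left, Submodule.coe_inner, ← h4, Complex.conj_ofReal]
      rw [h2, h3] at h1
      rw [hd, inner_add_right, inner_smul_right]
      exact h1
    have hdj : d = 0 := by
      apply lp.ext
      funext j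
      have := hinner_j j
      rw [lp.inner_single_left] at this
      simpa using this
    have hTxw : (⟪T x, T x⟫ : ℂ) = 0 := by
      have horth : (⟪T x, (↑w : E2)⟫ : ℂ) = 0 :=
        Submodule.inner_right_of_mem_orthogonal (LinearMap.mem_range_self _ x) w.2
      have h5 : (⟪T x, d⟫ : ℂ) = ⟪T x, T x⟫ := by
        rw [hd, inner_add_right, inner_smul_right, horth, mul_zero, add_zero]
      rw [hdj, inner_zero_right] at h5
      exact h5.symm
    have hTx0 : T x = 0 := inner_self_eq_zero.mp hTxw
    have hx0 : x = 0 := by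
      have h6 := hlower x
      rw [← hTcoe, hTx0] at h6
      simp only [norm_zero] at h6
      have : ‖x‖ = 0 := by
        by_contra hne
        have hpos : 0 < ‖x‖ := (norm_nonneg x).lt_of_ne (Ne.symm hne)
        have hpos2 : 0 < A * ‖x‖ ^ 2 := by positivity
        nlinarith [h6]
      exact norm_eq_zero.mp this
    have hw0 : w = 0 := by
      have h7 : (Real.sqrt A : ℂ) • (↑w : E2) = 0 := by
        have := hdj
        rw [hd, hTx0, zero_add] at this
        exact this
      have hAne : (Real.sqrt A : ℂ) ≠ 0 := by
        simp only [ne_eq, Complex.ofReal_eq_zero]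
        positivity
      have h8 : (↑w : E2) = 0 := by
        rcases smul_eq_zero.mp h7 with h | h
        · exact absurd h hAne
        · exact h
      exact Subtype.ext h8
    apply Lc.injective
    rw [map_zero]
    exact Prod.ext hx0 hw0
  -- the isometric embedding
  let ιlin : H →ₗ[ℂ] WithLp 2 (H × ↥W) :=
    ((WithLp.linearEquiv 2 ℂ (H × ↥W)).symm.toLinearMap).comp (LinearMap.inl ℂ H ↥W)
  have hιfst : ∀ h0 : H, (ιlin h0).fst = h0 := fun _ => rfl
  have hιsnd : ∀ h0 : H, (ιlin h0).snd = 0 := fun _ => rfl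
  let ι : H →ₗᵢ[ℂ] WithLp 2 (H × ↥W) :=
    { toLinearMap := ιlin
      norm_map' := by
        intro h0
        rw [WithLp.prod_norm_eq_of_L2, hιfst, hιsnd]
        simp [Real.sqrt_sq (norm_nonneg h0)] }
  have hιapp : ∀ h0 : H, ι h0 = ιlin h0 := fun _ => rfl
  -- separability
  have hsep : TopologicalSpace.SeparableSpace (WithLp 2 (H × ↥W)) := by
    rw [← TopologicalSpace.isSeparable_univ_iff]
    have h1 : TopologicalSpace.IsSeparable (Set.range e) := (Set.countable_range e).isSeparable
    have h2 : TopologicalSpace.IsSeparable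
        ((Submodule.span ℂ (Set.range e) : Submodule ℂ (WithLp 2 (H × ↥W))) :
          Set (WithLp 2 (H × ↥W))) :=
      TopologicalSpace.IsSeparable.span h1
    have h3 : TopologicalSpace.IsSeparable
        (closure ((Submodule.span ℂ (Set.range e) : Submodule ℂ (WithLp 2 (H × ↥W))) :
          Set (WithLp 2 (H × ↥W)))) := h2.closure
    have h4 : closure ((Submodule.span ℂ (Set.range e) : Submodule ℂ (WithLp 2 (H × ↥W))) :
        Set (WithLp 2 (H × ↥W))) = Set.univ := by
      rw [← Submodule.topologicalClosure_coe, hcomplete, Submodule.top_coe]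
    rwa [h4] at h3
  haveI : CompleteSpace (WithLp 2 (H × ↥W)) := inferInstance
  refine ⟨WithLp 2 (H × ↥W), inferInstance, inferInstance, inferInstance, hsep, ι, e,
    hcomplete, fun c => (hhasSum c).summable, fun c => ?_, fun j h0 => ?_⟩
  · rw [(hhasSum c).tsum_eq]
    exact ⟨(hSbounds c).1, (hSbounds c).2⟩
  · rw [WithLp.prod_inner_apply]
    simp only [WithLp.ofLp_fst, WithLp.ofLp_snd]
    have h1 : (e j - ι (f j)).fst = 0 := by
      rw [WithLp.sub_fst]
      rw [show (e j).fst = f j from by rw [hSfst, hTadj_single]]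
      rw [show (ι (f j)).fst = f j from rfl]
      simp
    have h2 : (ι h0).snd = (0 : ↥W) := rfl
    rw [h1, h2, inner_zero_left, inner_zero_right, add_zero]
end

section
/- Let H be a separable infinite-dimensional complex Hilbert space and let {f_j : j ∈ ℕ} ⊂ H be a Bessel system for H (i.e., ∑_{j∈ℕ} |⟨f, f_j⟩|² ≤ B‖f‖² for all f ∈ H, for some B > 0) that is complete in H. Then there exists a separable complex Hilbert space H' containing H as a closed subspace and a system {e_j : j ∈ ℕ} ⊂ H' that is complete in H' and ω-linearly independent for ℓ²(ℕ), such that P(e_j) = f_j for every j ∈ ℕ, where P : H' → H is the orthogonal projection onto H. -/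
set_option maxHeartbeats 1000000

open scoped ComplexInnerProductSpace

private lemma aux_mem_orthogonal_span {E : Type*} [NormedAddCommGroup E]
    [InnerProductSpace ℂ E] (S : Set E) (y : E) (h : ∀ u ∈ S, (⟪u, y⟫ : ℂ) = 0) :
    y ∈ (Submodule.span ℂ S)ᗮ := by
  rw [Submodule.mem_orthogonal]
  intro u hu
  induction hu using Submodule.span_induction with
  | mem u hu => exact h u hu
  | zero => simp
  | add u v _ _ hu hv => simp [inner_add_left, hu, hv]
  | smul a u _ hu => simp [inner_smul_left, hu]

private lemma aux_separable :
    TopologicalSpace.SeparableSpace (lp (fun _ : ℕ => ℂ) 2) := by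
  have b : HilbertBasis ℕ ℂ (lp (fun _ : ℕ => ℂ) 2) := default
  have hd := b.dense_span
  have hsep : TopologicalSpace.IsSeparable
      ((Submodule.span ℂ (Set.range b) : Submodule ℂ (lp (fun _ : ℕ => ℂ) 2)) :
        Set (lp (fun _ : ℕ => ℂ) 2)) :=
    (Set.countable_range b).isSeparable.span
  rw [← TopologicalSpace.isSeparable_univ_iff]
  have h2 := hsep.closure
  have h3 : closure ((Submodule.span ℂ (Set.range b) : Submodule ℂ (lp (fun _ : ℕ => ℂ) 2)) :
      Set (lp (fun _ : ℕ => ℂ) 2)) = Set.univ := by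
    rw [← Submodule.topologicalClosure_coe, hd, Submodule.top_coe]
  rwa [h3] at h2

/-- **Naimark duality for complete Bessel systems (Czaja).** If `{f j}` is a complete Bessel
system (with some constant `B > 0`) in a separable infinite-dimensional complex Hilbert space
`H`, then there is a separable complex Hilbert space `H'` containing `H` as a closed subspace
(realized by a linear isometry `ι`) and a system `{e j} ⊆ H'` that is complete in `H'` and
ω-linearly independent for `ℓ²(ℕ)` (if `c ∈ ℓ²(ℕ)` and `∑ c j • e j` converges to `0`, then
`c = 0`), whose orthogonal projection onto `ι(H)` is `{ι (f j)}`, i.e.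
`e j - ι (f j) ⟂ ι(H)` for all `j`. -/
theorem complete_bessel_is_projection_of_omega_independent
    {H : Type} [NormedAddCommGroup H] [InnerProductSpace ℂ H] [CompleteSpace H]
    [TopologicalSpace.SeparableSpace H] (hinf : ¬ FiniteDimensional ℂ H)
    (B : ℝ) (hB : 0 < B) (f : ℕ → H)
    (hbessel : ∀ x : H, ∑' j : ℕ, ‖(⟪x, f j⟫ : ℂ)‖ ^ 2 ≤ B * ‖x‖ ^ 2)
    (hcomplete : (Submodule.span ℂ (Set.range f)).topologicalClosure = ⊤) :
    ∃ (H' : Type) (_ : NormedAddCommGroup H') (_ : InnerProductSpace ℂ H')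
      (_ : CompleteSpace H') (_ : TopologicalSpace.SeparableSpace H')
      (ι : H →ₗᵢ[ℂ] H') (e : ℕ → H'),
      (Submodule.span ℂ (Set.range e)).topologicalClosure = ⊤ ∧
      (∀ c : lp (fun _ : ℕ => ℂ) 2,
        HasSum (fun j : ℕ => c j • e j) 0 → c = 0) ∧
      (∀ (j : ℕ) (h : H), (⟪e j - ι (f j), ι h⟫ : ℂ) = 0) := by
  classical
  set δ : ℕ → lp (fun _ : ℕ => ℂ) 2 := fun j => lp.single 2 j (1 : ℂ) with hδdef
  set Sset : Set (lp (fun _ : ℕ => ℂ) 2) :=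
    {u : lp (fun _ : ℕ => ℂ) 2 | ∃ x : H, ∀ j : ℕ, u j = ⟪f j, x⟫} with hSset
  set K : Submodule ℂ (lp (fun _ : ℕ => ℂ) 2) := (Submodule.span ℂ Sset)ᗮ with hK
  haveI : CompleteSpace K := (Submodule.isClosed_orthogonal _).completeSpace_coe
  haveI : K.HasOrthogonalProjection := Submodule.HasOrthogonalProjection.ofCompleteSpace (K := K)
  haveI : TopologicalSpace.SeparableSpace (lp (fun _ : ℕ => ℂ) 2) := aux_separable
  haveI : SecondCountableTopology (lp (fun _ : ℕ => ℂ) 2) :=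
    UniformSpace.secondCountable_of_separable _
  haveI : SecondCountableTopology H := UniformSpace.secondCountable_of_separable H
  haveI : SecondCountableTopology K := inferInstance
  -- the isometric embedding
  set ι₀ : H →ₗ[ℂ] WithLp 2 (H × K) :=
    { toFun := fun h => (WithLp.equiv 2 (H × K)).symm (h, 0)
      map_add' := by
        intro a b
        apply (WithLp.equiv 2 (H × K)).injective
        simp [Prod.ext_iff]
      map_smul' := by
        intro a b
        apply (WithLp.equiv 2 (H × K)).injective
        simp [Prod.ext_iff] } with hι₀
  set ι : H →ₗᵢ[ℂ] WithLp 2 (H × K) := ι₀.isometryOfInner (by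
    intro a b
    rw [WithLp.prod_inner_apply]
    show (⟪a, b⟫ : ℂ) + ⟪(0 : K), (0 : K)⟫ = ⟪a, b⟫
    simp) with hι
  set e : ℕ → WithLp 2 (H × K) := fun j =>
    (WithLp.equiv 2 (H × K)).symm (f j, K.orthogonalProjectionOnto (δ j)) with he
  have hefst : ∀ j, (e j).fst = f j := fun j => rfl
  have hesnd : ∀ j, (e j).snd = K.orthogonalProjectionOnto (δ j) := fun j => rfl
  refine ⟨WithLp 2 (H × K), inferInstance, inferInstance, inferInstance,
    inferInstance, ι, e, ?_, ?_, ?_⟩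
  -- completeness
  · rw [Submodule.topologicalClosure_eq_top_iff, Submodule.eq_bot_iff]
    intro v hv
    have hvj : ∀ j : ℕ, (⟪f j, v.fst⟫ : ℂ) +
        ⟪(K.orthogonalProjectionOnto (δ j) : lp (fun _ : ℕ => ℂ) 2),
          (v.snd : lp (fun _ : ℕ => ℂ) 2)⟫ = 0 := by
      intro j
      have h0 := (Submodule.mem_orthogonal _ v).1 hv _
        (Submodule.subset_span (Set.mem_range_self j))
      rw [WithLp.prod_inner_apply, WithLp.ofLp_fst, WithLp.ofLp_snd, hefst, hesnd] at h0
      rw [← h0]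
      congr 1
    have hy : ∀ j : ℕ, ((v.snd : lp (fun _ : ℕ => ℂ) 2) : ∀ _ : ℕ, ℂ) j = -⟪f j, v.fst⟫ := by
      intro j
      have h1 : (⟪(K.orthogonalProjectionOnto (δ j) : lp (fun _ : ℕ => ℂ) 2),
          (v.snd : lp (fun _ : ℕ => ℂ) 2)⟫ : ℂ)
          = ((v.snd : lp (fun _ : ℕ => ℂ) 2) : ∀ _ : ℕ, ℂ) j := by
        rw [← Submodule.starProjection_apply, Submodule.inner_starProjection_left_eq_right,
          Submodule.starProjection_mem_subspace_eq_self, hδdef]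
        simp only
        rw [lp.inner_single_left]
        simp
      have h2 := hvj j
      rw [h1] at h2
      linear_combination h2
    have humem : (-(v.snd : lp (fun _ : ℕ => ℂ) 2)) ∈ Sset := by
      refine ⟨v.fst, fun j => ?_⟩
      rw [lp.coeFn_neg]
      simp only [Pi.neg_apply]
      rw [hy j]; ring
    have hinner : (⟪-(v.snd : lp (fun _ : ℕ => ℂ) 2), (v.snd : lp (fun _ : ℕ => ℂ) 2)⟫ : ℂ) = 0 :=
      (Submodule.mem_orthogonal _ _).1 v.snd.2 _ (Submodule.subset_span humem)
    have hy0 : (v.snd : lp (fun _ : ℕ => ℂ) 2) = 0 := by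
      rw [inner_neg_left, neg_eq_zero, inner_self_eq_zero] at hinner
      exact hinner
    have hfx : ∀ j : ℕ, (⟪f j, v.fst⟫ : ℂ) = 0 := by
      intro j
      have h3 := hy j
      rw [hy0] at h3
      simp only [lp.coeFn_zero, Pi.zero_apply] at h3
      have h4 := h3.symm
      rwa [neg_eq_zero] at h4
    have hx0 : v.fst = 0 := by
      have hmem : v.fst ∈ (Submodule.span ℂ (Set.range f))ᗮ := by
        apply aux_mem_orthogonal_span
        rintro u ⟨j, rfl⟩
        exact hfx j
      rw [Submodule.topologicalClosure_eq_top_iff] at hcomplete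
      rw [hcomplete] at hmem
      simpa using hmem
    apply (WithLp.equiv 2 (H × K)).injective
    rw [Prod.ext_iff]
    exact ⟨hx0, Subtype.ext hy0⟩
  -- ω-independence
  · intro c hc
    have h1 : HasSum (fun j : ℕ => c j • f j) 0 := by
      have h0 := hc.mapL ((ContinuousLinearMap.fst ℂ H K).comp
        (WithLp.prodContinuousLinearEquiv 2 ℂ H K).toContinuousLinearMap)
      simpa [hefst] using h0
    have hcK : c ∈ K := by
      apply aux_mem_orthogonal_span
      rintro u ⟨x, hu⟩
      have h2 : HasSum (fun j : ℕ => (⟪u j, c j⟫ : ℂ)) ⟪u, c⟫ := lp.hasSum_inner u c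
      have h3 : HasSum (fun j : ℕ => (⟪u j, c j⟫ : ℂ)) 0 := by
        have h4 := h1.mapL (innerSL ℂ x)
        simp only [map_zero] at h4
        have heq : ∀ j : ℕ, (innerSL ℂ x) (c j • f j) = (⟪u j, c j⟫ : ℂ) := by
          intro j
          rw [hu j]
          simp only [innerSL_apply_apply, inner_smul_right]
          rw [RCLike.inner_apply, ← inner_conj_symm x (f j)]
        rwa [funext heq] at h4
      exact h2.unique h3
    have h4 : HasSum (fun j : ℕ => c j • K.orthogonalProjectionOnto (δ j)) 0 := by
      have h0 := hc.mapL ((ContinuousLinearMap.snd ℂ H K).comp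
        (WithLp.prodContinuousLinearEquiv 2 ℂ H K).toContinuousLinearMap)
      simpa [hesnd] using h0
    have h5 : HasSum (fun j : ℕ => c j • δ j) c := by
      have h0 := lp.hasSum_single (E := fun _ : ℕ => ℂ) (p := 2) (by norm_num) c
      have heq : ∀ j : ℕ, lp.single 2 j (c j) = c j • δ j := by
        intro j
        rw [hδdef]
        simp only
        rw [← lp.single_smul]
        norm_num
      rwa [funext heq] at h0
    have h6 : HasSum (fun j : ℕ => c j • K.orthogonalProjectionOnto (δ j))
        (K.orthogonalProjectionOnto c) := by
      have h0 := h5.mapL (K.orthogonalProjectionOnto)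
      simpa using h0
    have h7 : K.orthogonalProjectionOnto c = 0 := h6.unique h4
    have h8 : ((K.orthogonalProjectionOnto c : lp (fun _ : ℕ => ℂ) 2)) = c :=
      Submodule.starProjection_eq_self_iff.2 hcK
    rw [h7] at h8
    simpa using h8.symm
  -- the projection property
  · intro j h
    rw [WithLp.prod_inner_apply, WithLp.ofLp_fst, WithLp.ofLp_snd, WithLp.ofLp_fst, WithLp.ofLp_snd]
    have h1 : (e j - ι (f j)).fst = 0 := by
      show f j - f j = 0
      simp
    have h2 : (ι h).snd = 0 := rfl
    rw [h1, h2]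
    simp
end

section
/- Let {f_j : j ∈ ℕ} ⊂ ℓ²(ℕ) be a Bessel system for ℓ²(ℕ) with constant B > 0, and let {v_i : i ∈ ℕ} ⊂ ℓ²(ℕ) be its transpose system, v_i(j) = f_j(i). Then {f_j : j ∈ ℕ} is complete in ℓ²(ℕ) if and only if {v_i : i ∈ ℕ} is ω-linearly independent for ℓ²(ℕ), i.e., whenever c ∈ ℓ²(ℕ) and ∑_{i∈ℕ} c(i) v_i = 0 in ℓ²(ℕ), then c = 0. -/
open scoped ComplexInnerProductSpace

section Aux

local notation "E" => lp (fun _ : ℕ => ℂ) 2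

private lemma mem_orthogonal_span_range_iff (f : ℕ → E) (x : E) :
    x ∈ (Submodule.span ℂ (Set.range f))ᗮ ↔ ∀ j, ⟪f j, x⟫ = 0 := by
  constructor
  · intro hx j
    exact Submodule.inner_right_of_mem_orthogonal (Submodule.subset_span (Set.mem_range_self j)) hx
  · intro h
    rw [Submodule.mem_orthogonal]
    intro u hu
    induction hu using Submodule.span_induction with
    | mem u hu => obtain ⟨j, rfl⟩ := hu; exact h j
    | zero => simp
    | add u w _ _ hu hw => rw [inner_add_left, hu, hw, add_zero]
    | smul c u _ hu => rw [inner_smul_left, hu, mul_zero]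

/-- Coordinate evaluation as a continuous linear map on `ℓ²`. -/
private noncomputable def evalCLM (j : ℕ) : E →L[ℂ] ℂ :=
  LinearMap.mkContinuous
    { toFun := fun x => x j
      map_add' := fun x y => by simp [lp.coeFn_add]
      map_smul' := fun c x => by simp [lp.coeFn_smul] }
    1 (fun x => by
      show ‖x j‖ ≤ 1 * ‖x‖
      simpa using lp.norm_apply_le_norm (by norm_num : (2 : ENNReal) ≠ 0) x j)

@[simp] private lemma evalCLM_apply (j : ℕ) (x : E) : evalCLM j x = x j := rfl

end Aux

/-- **Duality between completeness and ω-linear independence.** Let `{f j} ⊆ ℓ²(ℕ)` be a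
Bessel system with constant `B > 0` and let `{v i} ⊆ ℓ²(ℕ)` be its transpose system,
`v i (j) = f j (i)`. Then `{f j}` is complete in `ℓ²(ℕ)` if and only if `{v i}` is ω-linearly
independent for `ℓ²(ℕ)`: whenever `c ∈ ℓ²(ℕ)` and `∑ c i • v i` converges in norm to `0`,
then `c = 0`. -/
theorem complete_iff_transpose_omega_independent
    (B : ℝ) (hB : 0 < B) (f : ℕ → lp (fun _ : ℕ => ℂ) 2)
    (hbessel : ∀ x : lp (fun _ : ℕ => ℂ) 2,
      ∑' j : ℕ, ‖(⟪x, f j⟫ : ℂ)‖ ^ 2 ≤ B * ‖x‖ ^ 2)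
    (v : ℕ → lp (fun _ : ℕ => ℂ) 2) (hv : ∀ i j : ℕ, v i j = f j i) :
    (Submodule.span ℂ (Set.range f)).topologicalClosure = ⊤ ↔
      (∀ c : lp (fun _ : ℕ => ℂ) 2,
        HasSum (fun i : ℕ => c i • v i) 0 → c = 0) := by
  rw [Submodule.topologicalClosure_eq_top_iff]
  constructor
  · -- orthogonal trivial → ω-independent
    intro hbot c hc
    -- coordinatewise sums vanish
    have hcoord : ∀ j : ℕ, HasSum (fun i : ℕ => c i * f j i) 0 := by
      intro j
      have h1 := hc.mapL (evalCLM j)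
      simp only [evalCLM_apply, map_zero] at h1
      have : (fun i : ℕ => (c i • v i) j) = fun i : ℕ => c i * f j i := by
        funext i
        rw [lp.coeFn_smul, Pi.smul_apply, smul_eq_mul, hv]
      rwa [this] at h1
    -- hence `star c` is orthogonal to every `f j`
    have hmem : star c ∈ (Submodule.span ℂ (Set.range f))ᗮ := by
      rw [mem_orthogonal_span_range_iff]
      intro j
      have h2 : HasSum (fun i : ℕ => star (c i * f j i)) (star (0 : ℂ)) := (hcoord j).star
      have h3 : (fun i : ℕ => ⟪(f j : ∀ _ : ℕ, ℂ) i, (star c : lp (fun _ : ℕ => ℂ) 2) i⟫)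
          = fun i : ℕ => star (c i * f j i) := by
        funext i
        rw [lp.star_apply]
        simp [RCLike.inner_apply, star_mul, mul_comm]
      have h4 := lp.hasSum_inner (𝕜 := ℂ) (f j) (star c)
      rw [h3] at h4
      simpa using h4.unique h2
    have : star c = 0 := by
      rw [hbot] at hmem
      simpa using hmem
    calc c = star (star c) := (star_star c).symm
    _ = 0 := by rw [this, star_zero]
  · -- ω-independent → orthogonal trivial
    intro hind
    rw [Submodule.eq_bot_iff]
    intro x hx
    rw [mem_orthogonal_span_range_iff] at hx
    have hx' : ∀ j : ℕ, ⟪x, f j⟫ = 0 := by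
      intro j
      rw [← inner_conj_symm, hx j, map_zero]
    set c : lp (fun _ : ℕ => ℂ) 2 := star x with hc
    -- partial sums
    set S : Finset ℕ → lp (fun _ : ℕ => ℂ) 2 := fun F => ∑ i ∈ F, c i • v i with hS
    set P : Finset ℕ → lp (fun _ : ℕ => ℂ) 2 :=
      fun F => ∑ i ∈ F, lp.single 2 i (x i) with hP
    have hPx : ∀ F : Finset ℕ, ∀ j : ℕ, (S F) j = ⟪P F - x, f j⟫ := by
      intro F j
      have hSj : (S F) j = ∑ i ∈ F, (starRingEnd ℂ) (x i) * f j i := by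
        rw [hS]
        rw [lp.coeFn_sum, Finset.sum_apply]
        refine Finset.sum_congr rfl fun i _ => ?_
        rw [lp.coeFn_smul, Pi.smul_apply, smul_eq_mul, hv, hc, lp.star_apply]
        rfl
      have hPj : ⟪P F, f j⟫ = ∑ i ∈ F, (starRingEnd ℂ) (x i) * f j i := by
        rw [hP, sum_inner]
        refine Finset.sum_congr rfl fun i _ => ?_
        rw [lp.inner_single_left]
        simp [RCLike.inner_apply]
        ring
      rw [inner_sub_left, hx' j, sub_zero, hSj, hPj]
    -- norm bound via Bessel
    have hbound : ∀ F : Finset ℕ, ‖S F‖ ≤ Real.sqrt B * ‖P F - x‖ := by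
      intro F
      have h2 : (0:ℝ) < (2 : ENNReal).toReal := by norm_num
      have hnorm : ‖S F‖ ^ (2 : ℕ) = ∑' j : ℕ, ‖(S F) j‖ ^ (2 : ℕ) := by
        have := lp.norm_rpow_eq_tsum h2 (S F)
        have h2' : (2 : ENNReal).toReal = ((2 : ℕ) : ℝ) := by norm_num
        rw [h2'] at this
        simpa [Real.rpow_natCast] using this
      have key : ‖S F‖ ^ (2:ℕ) ≤ B * ‖P F - x‖ ^ 2 := by
        rw [hnorm]
        have : (fun j : ℕ => ‖(S F) j‖ ^ (2:ℕ))
            = fun j : ℕ => ‖(⟪P F - x, f j⟫ : ℂ)‖ ^ 2 := by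
          funext j; rw [hPx F j]
        rw [this]
        exact hbessel (P F - x)
      have hs : ‖S F‖ ≤ Real.sqrt (B * ‖P F - x‖ ^ 2) := by
        have h := Real.sqrt_le_sqrt key
        rwa [Real.sqrt_sq (norm_nonneg _)] at h
      calc ‖S F‖ ≤ Real.sqrt (B * ‖P F - x‖ ^ 2) := hs
      _ = Real.sqrt B * ‖P F - x‖ := by
          rw [Real.sqrt_mul hB.le, Real.sqrt_sq (norm_nonneg _)]
    -- P F → x
    have hPtend : Filter.Tendsto (fun F : Finset ℕ => ‖P F - x‖)
        Filter.atTop (nhds 0) := by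
      have h1 : HasSum (fun i : ℕ => lp.single 2 i (x i)) x :=
        lp.hasSum_single (by norm_num) x
      have := h1.tendsto_sum_nat
      have h2 : Filter.Tendsto (fun F : Finset ℕ => P F) Filter.atTop (nhds x) := h1
      have h3 := h2.sub (tendsto_const_nhds (x := x))
      simpa using h3.norm
    have hSnorm : Filter.Tendsto (fun F : Finset ℕ => ‖S F‖) Filter.atTop (nhds 0) := by
      have hb : Filter.Tendsto (fun F : Finset ℕ => Real.sqrt B * ‖P F - x‖)
          Filter.atTop (nhds 0) := by
        simpa using hPtend.const_mul (Real.sqrt B)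
      exact squeeze_zero (fun F => norm_nonneg _) hbound hb
    have hsum : HasSum (fun i : ℕ => c i • v i) 0 := by
      have : Filter.Tendsto (fun F : Finset ℕ => S F) Filter.atTop (nhds 0) :=
        tendsto_zero_iff_norm_tendsto_zero.mpr hSnorm
      exact this
    have hc0 : c = 0 := hind c hsum
    calc x = star (star x) := (star_star x).symm
    _ = 0 := by rw [← hc, hc0, star_zero]
end

section
/- Let A > 0 and let {f_j : j ∈ ℕ} ⊂ ℓ²(ℕ) be such that its transpose system {v_i : i ∈ ℕ}, v_i(j) = f_j(i), satisfies: each v_i ∈ ℓ²(ℕ). Suppose L = ℕ ⊔ K is a countable index set, {w_k : k ∈ K} ⊂ ℓ²(ℕ), and the combined family {u_l : l ∈ L} with u_l = v_l for l ∈ ℕ and u_l = w_l for l ∈ K is ω-linearly independent for ℓ²(L) and satisfies the upper Riesz inequality with some constant B > 0. Define e_j ∈ ℓ²(L) by e_j(l) = u_l(j) for j ∈ ℕ, l ∈ L. Then the system {e_j : j ∈ ℕ} is complete in ℓ²(L). -/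
open scoped ComplexInnerProductSpace

noncomputable def lpEval {ι : Type*} (j : ι) : lp (fun _ : ι => ℂ) 2 →L[ℂ] ℂ :=
  LinearMap.mkContinuous
    { toFun := fun x => x j
      map_add' := fun x y => by simp [lp.coeFn_add]
      map_smul' := fun r x => by simp [lp.coeFn_smul] }
    1 (fun x => by show ‖x j‖ ≤ 1 * ‖x‖; simpa using lp.norm_apply_le_norm (by norm_num) x j)

/-- **Completeness of the column system associated to an ω-independent row system.** Let
`{f j} ⊆ ℓ²(ℕ)` have transpose rows `v i (j) = f j (i)`, each belonging to `ℓ²(ℕ)` (formalized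
by the data `v : ℕ → ℓ²(ℕ)` with the prescribed entries). Let `L = ℕ ⊔ K` be a countable index
type, let `{w k}_{k ∈ K} ⊆ ℓ²(ℕ)`, and suppose the combined row family `u : L → ℓ²(ℕ)` (with
`u (inl i) = v i` and `u (inr k) = w k`) is ω-linearly independent for `ℓ²(L)` and satisfies
the upper Riesz inequality with some constant `B > 0`. If `e j ∈ ℓ²(L)` are the columns,
`e j (l) = u l (j)`, then the system `{e j}` is complete in `ℓ²(L)`. -/
theorem column_system_is_complete
    (A : ℝ) (hA : 0 < A) (B : ℝ) (hB : 0 < B)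
    (f : ℕ → lp (fun _ : ℕ => ℂ) 2) (v : ℕ → lp (fun _ : ℕ => ℂ) 2)
    (hv : ∀ i j : ℕ, v i j = f j i)
    (K : Type) [Countable K] (w : K → lp (fun _ : ℕ => ℂ) 2)
    (u : ℕ ⊕ K → lp (fun _ : ℕ => ℂ) 2)
    (huv : ∀ i : ℕ, u (Sum.inl i) = v i) (huw : ∀ k : K, u (Sum.inr k) = w k)
    (hindep : ∀ c : lp (fun _ : ℕ ⊕ K => ℂ) 2,
      HasSum (fun l : ℕ ⊕ K => c l • u l) 0 → c = 0)
    (hsummable : ∀ c : lp (fun _ : ℕ ⊕ K => ℂ) 2,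
      Summable (fun l : ℕ ⊕ K => c l • u l))
    (hriesz : ∀ c : lp (fun _ : ℕ ⊕ K => ℂ) 2,
      ‖∑' l : ℕ ⊕ K, c l • u l‖ ^ 2 ≤ B * ‖c‖ ^ 2)
    (e : ℕ → lp (fun _ : ℕ ⊕ K => ℂ) 2)
    (he : ∀ (j : ℕ) (l : ℕ ⊕ K), e j l = u l j) :
    (Submodule.span ℂ (Set.range e)).topologicalClosure = ⊤ := by
  rw [Submodule.topologicalClosure_eq_top_iff, Submodule.eq_bot_iff]
  intro c hc
  -- orthogonality of c to each e j
  have hperp : ∀ j : ℕ, (inner ℂ (e j) c : ℂ) = 0 := fun j =>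
    hc (e j) (Submodule.subset_span ⟨j, rfl⟩)
  set d : lp (fun _ : ℕ ⊕ K => ℂ) 2 := star c with hd
  have hdl : ∀ l, d l = star (c l) := fun l => lp.star_apply c l
  have hT : (∑' l : ℕ ⊕ K, d l • u l) = 0 := by
    apply lp.ext
    funext j
    have hmap := (lpEval j).map_tsum (hsummable d)
    have : (∑' l : ℕ ⊕ K, d l • u l) j = ∑' l : ℕ ⊕ K, d l * u l j := by
      exact hmap.trans (tsum_congr fun l => rfl)
    rw [lp.coeFn_zero, Pi.zero_apply, this]
    have hinner : (inner ℂ c (e j) : ℂ) = ∑' l : ℕ ⊕ K, star (c l) * e j l := by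
      rw [lp.inner_eq_tsum]; exact tsum_congr fun l => by rw [RCLike.inner_apply']; rfl
    have h0 : (inner ℂ c (e j) : ℂ) = 0 := by
      rw [← inner_conj_symm, hperp j, map_zero]
    calc ∑' l : ℕ ⊕ K, d l * u l j = ∑' l : ℕ ⊕ K, star (c l) * e j l := by
          congr 1; funext l; rw [hdl, he]
      _ = 0 := by rw [← hinner, h0]
  have hd0 : d = 0 := hindep d (hT ▸ (hsummable d).hasSum)
  have : star d = star (0 : lp (fun _ : ℕ ⊕ K => ℂ) 2) := by rw [hd0]
  simpa [hd, star_star] using this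
end
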